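/- arXiv:1506.05222 — 2 statements merged into one kernel-verified Lean document; each statement's English description precedes it below -/
import Mathlib

section
/- In the no-outage case, the intensity measure of the NLOS path-loss process is Λ_NLOS([0,x)) = πλκ^{-2}·x^{2/β} − K·(1 − e^{−Q·x^{1/β}} − Q·x^{1/β}·e^{−Q·x^{1/β}}); that is, 2πλ ∫_0^∞ 1{x > (κr)^β}·(1 − γ·e^{−δr})·r dr equals this expression for all x ≥ 0, where K = 2πλγ/δ² and Q = δ/κ. -/
open Real MeasureTheory

theorem intensity_NLOS_no_outage (κ β lam δ γ : ℝ) (hκ : 0 < κ) (hβ : 1 ≤ β)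
    (hlam : 0 < lam) (hδ : 0 < δ) (hγ0 : 0 ≤ γ) (hγ1 : γ ≤ 1) :
    ∀ x ≥ (0 : ℝ),
      2 * π * lam *
          ∫ r in Set.Ioi (0 : ℝ),
            (if x > (κ * r) ^ β then (1 - γ * Real.exp (-δ * r)) * r else 0) =
        π * lam * κ ^ (-2 : ℝ) * x ^ (2 / β) -
          (2 * π * lam * γ / δ ^ 2) *
            (1 - Real.exp (-(δ / κ) * x ^ (1 / β))
              - (δ / κ) * x ^ (1 / β) * Real.exp (-(δ / κ) * x ^ (1 / β))) := by
  intro x hx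
  have hβ0 : (0:ℝ) < β := lt_of_lt_of_le one_pos hβ
  set R : ℝ := x ^ (1/β) / κ with hR
  have hy0 : 0 ≤ x ^ (1/β) := Real.rpow_nonneg hx _
  have hR0 : 0 ≤ R := div_nonneg hy0 hκ.le
  have hxb : (x ^ (1/β)) ^ β = x := by
    rw [one_div]; exact Real.rpow_inv_rpow hx hβ0.ne'
  have key : ∀ r ∈ Set.Ioi (0:ℝ), (x > (κ*r)^β ↔ r < R) := by
    intro r hr
    have hr0 : (0:ℝ) < r := hr
    rw [gt_iff_lt]
    calc (κ*r)^β < x ↔ (κ*r)^β < (x^(1/β))^β := by rw [hxb]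
      _ ↔ κ*r < x^(1/β) := Real.rpow_lt_rpow_iff (by positivity) hy0 hβ0
      _ ↔ r*κ < x^(1/β) := by rw [mul_comm]
      _ ↔ r < R := (lt_div_iff₀ hκ).symm
  have h1 : (∫ r in Set.Ioi (0:ℝ),
        (if x > (κ*r)^β then (1 - γ * Real.exp (-δ*r)) * r else 0))
      = ∫ r in Set.Ioo 0 R, (1 - γ * Real.exp (-δ*r)) * r := by
    rw [← Set.Ioi_inter_Iio, ← MeasureTheory.setIntegral_indicator measurableSet_Iio]
    refine setIntegral_congr_fun measurableSet_Ioi fun r hr => ?_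
    simp only [Set.indicator_apply, Set.mem_Iio]
    exact if_congr (key r hr) rfl rfl
  have hexp : ∀ r:ℝ, HasDerivAt (fun r => Real.exp (-δ*r)) (-δ * Real.exp (-δ*r)) r := by
    intro r
    simpa [mul_comm] using ((hasDerivAt_id r).const_mul (-δ)).exp
  set F : ℝ → ℝ := fun r =>
    r^2/2 + (γ/δ) * (r * Real.exp (-δ*r)) + (γ/δ^2) * Real.exp (-δ*r) with hF
  have hF' : ∀ r:ℝ, HasDerivAt F ((1 - γ * Real.exp (-δ*r)) * r) r := by
    intro r
    have h1 := (hasDerivAt_pow 2 r).div_const 2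
    have h2 := ((hasDerivAt_id r).mul (hexp r)).const_mul (γ/δ)
    have h3 := (hexp r).const_mul (γ/δ^2)
    convert (h1.add h2).add h3 using 1
    · rfl
    · rfl
    · rfl
    · simp only [id]
      field_simp
      ring
  have hcont : Continuous fun r:ℝ => (1 - γ * Real.exp (-δ*r)) * r := by continuity
  have hint : ∫ r in (0:ℝ)..R, (1 - γ * Real.exp (-δ*r)) * r = F R - F 0 :=
    intervalIntegral.integral_eq_sub_of_hasDerivAt (fun r _ => hF' r)
      (hcont.intervalIntegrable 0 R)
  have h2 : ∫ r in Set.Ioo 0 R, (1 - γ * Real.exp (-δ*r)) * r = F R - F 0 := by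
    rw [← MeasureTheory.integral_Ioc_eq_integral_Ioo,
      ← intervalIntegral.integral_of_le hR0, hint]
  rw [h1, h2]
  have e12 : κ ^ (-2:ℝ) * x ^ (2/β) = R^2 := by
    have e1 : x ^ (2/β) = (x ^ (1/β))^2 := by
      rw [← Real.rpow_natCast (x ^ (1/β)) 2, ← Real.rpow_mul hx]
      norm_num [div_eq_mul_inv, mul_comm]
    have e2 : κ ^ (-2:ℝ) = (κ^2)⁻¹ := by
      rw [show (-2:ℝ) = -((2:ℕ):ℝ) by norm_num, Real.rpow_neg hκ.le, Real.rpow_natCast]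
    rw [e1, e2, hR]
    field_simp
  have e3 : -(δ/κ) * x^(1/β) = -δ * R := by rw [hR]; ring
  rw [show π * lam * κ ^ (-2:ℝ) * x ^ (2/β) = π * lam * (κ ^ (-2:ℝ) * x ^ (2/β)) by ring,
    e12, e3, show (δ/κ) * x^(1/β) = δ * R by rw [hR]; ring]
  simp only [hF, mul_zero, neg_zero, Real.exp_zero, mul_one, zero_mul]
  field_simp
  ring
end

section
/- The function x ↦ Λ(x) := Λ_LOS(x) + Λ_NLOS(x), with Λ_LOS(x) = K·(1 − e^{−Q_L·x^{1/β_L}} − Q_L·x^{1/β_L}·e^{−Q_L·x^{1/β_L}}) and Λ_NLOS(x) = πλκ_N^{-2}·x^{2/β_N} − K·(1 − e^{−Q_N·x^{1/β_N}} − Q_N·x^{1/β_N}·e^{−Q_N·x^{1/β_N}}), is nonnegative, nondecreasing on [0, ∞), satisfies Λ(0) = 0, and tends to ∞ as x → ∞. -/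
open Real Filter

private lemma hasDerivAt_g (t : ℝ) :
    HasDerivAt (fun t : ℝ => 1 - Real.exp (-t) - t * Real.exp (-t))
      (t * Real.exp (-t)) t := by
  have he : HasDerivAt (fun t : ℝ => Real.exp (-t)) (-Real.exp (-t)) t := by
    simpa [Function.comp_def] using (Real.hasDerivAt_exp (-t)).comp t ((hasDerivAt_id t).neg)
  have h := ((hasDerivAt_const t (1 : ℝ)).sub he).sub ((hasDerivAt_id t).mul he)
  refine h.congr_deriv ?_
  simp only [id_eq]
  ring

private lemma g_mono :
    MonotoneOn (fun t : ℝ => 1 - Real.exp (-t) - t * Real.exp (-t)) (Set.Ici 0) := by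
  apply monotoneOn_of_deriv_nonneg (convex_Ici 0)
  · exact (by continuity : Continuous fun t : ℝ => 1 - Real.exp (-t) - t * Real.exp (-t)).continuousOn
  · exact fun x _ => (hasDerivAt_g x).differentiableAt.differentiableWithinAt
  · intro x hx
    rw [interior_Ici] at hx
    rw [(hasDerivAt_g x).deriv]
    have : (0:ℝ) < x := hx
    positivity

private lemma g_nonneg (t : ℝ) (ht : 0 ≤ t) :
    0 ≤ 1 - Real.exp (-t) - t * Real.exp (-t) := by
  have := g_mono (Set.self_mem_Ici) (ht : t ∈ Set.Ici (0:ℝ)) ht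
  simpa using this

private lemma g_le_one (t : ℝ) (ht : 0 ≤ t) :
    1 - Real.exp (-t) - t * Real.exp (-t) ≤ 1 := by
  nlinarith [Real.exp_pos (-t), mul_nonneg ht (Real.exp_pos (-t)).le]

private lemma hasDerivAt_F (t : ℝ) :
    HasDerivAt (fun t : ℝ => t ^ 2 / 2 - (1 - Real.exp (-t) - t * Real.exp (-t)))
      (t * (1 - Real.exp (-t))) t := by
  have h := ((hasDerivAt_pow 2 t).div_const 2).sub (hasDerivAt_g t)
  refine h.congr_deriv ?_
  norm_num
  ring

private lemma g_le_half_sq (t : ℝ) (ht : 0 ≤ t) :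
    1 - Real.exp (-t) - t * Real.exp (-t) ≤ t ^ 2 / 2 := by
  have hmono : MonotoneOn
      (fun t : ℝ => t ^ 2 / 2 - (1 - Real.exp (-t) - t * Real.exp (-t))) (Set.Ici 0) := by
    apply monotoneOn_of_deriv_nonneg (convex_Ici 0)
    · exact (by continuity : Continuous fun t : ℝ =>
        t ^ 2 / 2 - (1 - Real.exp (-t) - t * Real.exp (-t))).continuousOn
    · exact fun x _ => (hasDerivAt_F x).differentiableAt.differentiableWithinAt
    · intro x hx
      rw [interior_Ici] at hx
      rw [(hasDerivAt_F x).deriv]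
      have hx0 : (0:ℝ) < x := hx
      have : Real.exp (-x) ≤ 1 := Real.exp_le_one_iff.mpr (by linarith)
      nlinarith
  have h0 := hmono (Set.self_mem_Ici) (ht : t ∈ Set.Ici (0:ℝ)) ht
  simp only [neg_zero, Real.exp_zero, zero_mul, mul_zero] at h0
  nlinarith [h0]

private lemma hasDerivAt_h (γ t : ℝ) :
    HasDerivAt (fun t : ℝ => t ^ 2 - 2 * γ * (1 - Real.exp (-t) - t * Real.exp (-t)))
      (2 * t - 2 * γ * (t * Real.exp (-t))) t := by
  have h := (hasDerivAt_pow 2 t).sub ((hasDerivAt_g t).const_mul (2 * γ))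
  refine h.congr_deriv ?_
  norm_num

private lemma h_mono (γ : ℝ) (hγ0 : 0 ≤ γ) (hγ1 : γ ≤ 1) :
    MonotoneOn (fun t : ℝ => t ^ 2 - 2 * γ * (1 - Real.exp (-t) - t * Real.exp (-t)))
      (Set.Ici 0) := by
  apply monotoneOn_of_deriv_nonneg (convex_Ici 0)
  · exact (by continuity : Continuous fun t : ℝ =>
      t ^ 2 - 2 * γ * (1 - Real.exp (-t) - t * Real.exp (-t))).continuousOn
  · exact fun x _ => (hasDerivAt_h γ x).differentiableAt.differentiableWithinAt
  · intro x hx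
    rw [interior_Ici] at hx
    rw [(hasDerivAt_h γ x).deriv]
    have hx0 : (0:ℝ) < x := hx
    have h1 : Real.exp (-x) ≤ 1 := Real.exp_le_one_iff.mpr (by linarith)
    have h2 : γ * Real.exp (-x) ≤ 1 := by
      calc γ * Real.exp (-x) ≤ 1 * 1 := by
            apply mul_le_mul hγ1 h1 (Real.exp_pos _).le zero_le_one
        _ = 1 := by ring
    nlinarith

theorem total_intensity_properties
    (lam δ γ κL κN βL βN : ℝ)
    (hlam : 0 < lam) (hδ : 0 < δ) (hγ0 : 0 ≤ γ) (hγ1 : γ ≤ 1)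
    (hκL : 0 < κL) (hκN : 0 < κN) (hβL : 1 ≤ βL) (hβN : 1 ≤ βN)
    (K QL QN : ℝ) (hK : K = 2 * π * lam * γ / δ ^ 2)
    (hQL : QL = δ / κL) (hQN : QN = δ / κN)
    (ΛLOS ΛNLOS Λ : ℝ → ℝ)
    (hL : ∀ x, ΛLOS x = K * (1 - Real.exp (-QL * x ^ (1 / βL))
        - QL * x ^ (1 / βL) * Real.exp (-QL * x ^ (1 / βL))))
    (hN : ∀ x, ΛNLOS x = π * lam * κN ^ (-2 : ℝ) * x ^ (2 / βN)
        - K * (1 - Real.exp (-QN * x ^ (1 / βN))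
          - QN * x ^ (1 / βN) * Real.exp (-QN * x ^ (1 / βN))))
    (hΛ : ∀ x, Λ x = ΛLOS x + ΛNLOS x) :
    (∀ x ≥ (0 : ℝ), 0 ≤ Λ x) ∧ MonotoneOn Λ (Set.Ici 0) ∧ Λ 0 = 0 ∧
      Tendsto Λ atTop atTop := by
  have hπ : (0:ℝ) < π := Real.pi_pos
  have hβL0 : 0 < βL := lt_of_lt_of_le zero_lt_one hβL
  have hβN0 : 0 < βN := lt_of_lt_of_le zero_lt_one hβN
  have hQL0 : 0 < QL := by rw [hQL]; positivity
  have hQN0 : 0 < QN := by rw [hQN]; positivity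
  set c : ℝ := π * lam / δ ^ 2 with hc_def
  have hc : 0 < c := by positivity
  have hK' : K = 2 * c * γ := by rw [hK, hc_def]; ring
  have hK0 : 0 ≤ K := by rw [hK']; positivity
  -- the rewriting of the NLOS power term
  have hκ2 : κN ^ (-2 : ℝ) = (κN ^ 2)⁻¹ := by
    rw [Real.rpow_neg hκN.le, show ((2:ℝ)) = ((2:ℕ):ℝ) by norm_num, Real.rpow_natCast]
  have hpow : ∀ x : ℝ, 0 ≤ x →
      π * lam * κN ^ (-2 : ℝ) * x ^ (2 / βN) = c * (QN * x ^ (1 / βN)) ^ 2 := by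
    intro x hx
    have h2 : x ^ (2 / βN) = (x ^ (1 / βN)) ^ 2 := by
      rw [← Real.rpow_natCast (x ^ (1 / βN)) 2, ← Real.rpow_mul hx]
      norm_num
      congr 1
      ring
    rw [hκ2, h2, hQN, hc_def]
    field_simp
  have hNform : ∀ x : ℝ, 0 ≤ x → ΛNLOS x =
      c * ((QN * x ^ (1 / βN)) ^ 2 - 2 * γ * (1 - Real.exp (-(QN * x ^ (1 / βN)))
        - QN * x ^ (1 / βN) * Real.exp (-(QN * x ^ (1 / βN))))) := by
    intro x hx
    rw [hN, hpow x hx, hK']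
    ring_nf
  have htN : ∀ x : ℝ, 0 ≤ x → 0 ≤ QN * x ^ (1 / βN) := fun x hx => by positivity
  have htL : ∀ x : ℝ, 0 ≤ x → 0 ≤ QL * x ^ (1 / βL) := fun x hx => by positivity
  have hLform : ∀ x : ℝ, ΛLOS x = K * (1 - Real.exp (-(QL * x ^ (1 / βL)))
      - QL * x ^ (1 / βL) * Real.exp (-(QL * x ^ (1 / βL)))) := by
    intro x; rw [hL]; ring_nf
  refine ⟨?_, ?_, ?_, ?_⟩
  · -- nonnegativity
    intro x hx
    rw [hΛ, hLform, hNform x hx]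
    set t := QN * x ^ (1 / βN) with ht_def
    set s := QL * x ^ (1 / βL) with hs_def
    have hts : 0 ≤ t := htN x hx
    have hss : 0 ≤ s := htL x hx
    have h1 := g_nonneg s hss
    have h2 := g_nonneg t hts
    have h3 := g_le_half_sq t hts
    have h4 : 0 ≤ t ^ 2 - 2 * γ * (1 - Real.exp (-t) - t * Real.exp (-t)) := by
      nlinarith
    have := mul_nonneg hK0 h1
    nlinarith [mul_nonneg hc.le h4]
  · -- monotone
    intro x hx y hy hxy
    have hx0 : (0:ℝ) ≤ x := hx
    have hy0 : (0:ℝ) ≤ y := hy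
    rw [hΛ, hΛ, hLform, hLform, hNform x hx0, hNform y hy0]
    have hr : ∀ β : ℝ, 1 ≤ β → x ^ (1 / β) ≤ y ^ (1 / β) := by
      intro β hβ
      exact Real.rpow_le_rpow hx0 hxy (by positivity)
    have hLle : QL * x ^ (1 / βL) ≤ QL * y ^ (1 / βL) :=
      mul_le_mul_of_nonneg_left (hr βL hβL) hQL0.le
    have hNle : QN * x ^ (1 / βN) ≤ QN * y ^ (1 / βN) :=
      mul_le_mul_of_nonneg_left (hr βN hβN) hQN0.le
    have hgL := g_mono (htL x hx0) (htL y hy0) hLle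
    have hhN := h_mono γ hγ0 hγ1 (htN x hx0) (htN y hy0) hNle
    simp only [] at hgL hhN
    have := mul_le_mul_of_nonneg_left hgL hK0
    have := mul_le_mul_of_nonneg_left hhN hc.le
    linarith
  · -- value at 0
    have h0L : (0:ℝ) ^ (1 / βL) = 0 := Real.zero_rpow (by positivity)
    have h0N : (0:ℝ) ^ (1 / βN) = 0 := Real.zero_rpow (by positivity)
    have h0N2 : (0:ℝ) ^ (2 / βN) = 0 := Real.zero_rpow (by positivity)
    rw [hΛ, hL, hN, h0L, h0N, h0N2]
    simp only [mul_zero, zero_mul, neg_zero, Real.exp_zero]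
    ring
  · -- tendsto atTop
    have hlow : ∀ x : ℝ, 0 ≤ x →
        π * lam * κN ^ (-2 : ℝ) * x ^ (2 / βN) - K ≤ Λ x := by
      intro x hx
      rw [hΛ, hLform, hN]
      set t := QN * x ^ (1 / βN) with ht_def
      set s := QL * x ^ (1 / βL) with hs_def
      have hts : 0 ≤ t := htN x hx
      have hss : 0 ≤ s := htL x hx
      have h1 := g_nonneg s hss
      have h2 := g_le_one t hts
      have h3 := mul_nonneg hK0 h1
      have h4 : K * (1 - Real.exp (-t) - t * Real.exp (-t)) ≤ K * 1 :=
        mul_le_mul_of_nonneg_left h2 hK0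
      have ht' : (1 : ℝ) - Real.exp (-QN * x ^ (1 / βN))
          - QN * x ^ (1 / βN) * Real.exp (-QN * x ^ (1 / βN))
          = 1 - Real.exp (-t) - t * Real.exp (-t) := by
        rw [ht_def]; ring_nf
      rw [ht']
      linarith [h3, h4]
    have hcoef : 0 < π * lam * κN ^ (-2 : ℝ) := by
      have : (0:ℝ) < κN ^ (-2 : ℝ) := Real.rpow_pos_of_pos hκN _
      positivity
    have ht1 : Tendsto (fun x : ℝ => π * lam * κN ^ (-2 : ℝ) * x ^ (2 / βN)) atTop atTop :=
      Tendsto.const_mul_atTop hcoef (tendsto_rpow_atTop (by positivity : (0:ℝ) < 2 / βN))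
    have ht2 : Tendsto (fun x : ℝ => π * lam * κN ^ (-2 : ℝ) * x ^ (2 / βN) - K)
        atTop atTop := by
      simpa [sub_eq_add_neg] using tendsto_atTop_add_const_right atTop (-K) ht1
    refine tendsto_atTop_mono' atTop ?_ ht2
    filter_upwards [eventually_ge_atTop (0:ℝ)] with x hx
    exact hlow x hx
end
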